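/- Let Θ be a countable model with prior π whose density ratios are uniformly bounded by some v > 1. Then for every θ* ∈ Θ, every n and every z^n ∈ Z^n, the expected next-step mixability gap satisfies δ̄_n(θ*, z^n) ≤ Σ_{θ∈Θ} π(θ | z^n) · D(P_{θ*} ‖ P_θ), where D(P_{θ*} ‖ P_θ) = ∫_Z f_{θ*}(z) log( f_{θ*}(z)/f_θ(z) ) ρ(dz) is the Kullback–Leibler divergence. -/

import Mathlib

open MeasureTheory ENNReal

noncomputable section

/-- Unnormalized posterior weight of `θ` given the sample `z`. -/
def postNum {Z : Type*} {Θ : Type*} (π : Θ → ℝ) (f : Θ → Z → ℝ) {n : ℕ}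
    (z : Fin n → Z) (θ : Θ) : ℝ :=
  π θ * ∏ i, f θ (z i)

/-- The Bayesian posterior of `θ` given the sample `z`. -/
def post {Z : Type*} {Θ : Type*} (π : Θ → ℝ) (f : Θ → Z → ℝ) {n : ℕ}
    (z : Fin n → Z) (θ : Θ) : ℝ :=
  postNum π f z θ / ∑' θ', postNum π f z θ'

/-- The Bayes predictive density of a next outcome `x` given the sample `z`. -/
def pBayes {Z : Type*} {Θ : Type*} (π : Θ → ℝ) (f : Θ → Z → ℝ) {n : ℕ}
    (z : Fin n → Z) (x : Z) : ℝ :=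
  ∑' θ, post π f z θ * f θ x

/-- The expected next-step mixability gap `δ̄_n(θ*, z^n)`. -/
def deltaBar {Z : Type*} [MeasurableSpace Z] (ρ : Measure Z) {Θ : Type*}
    (π : Θ → ℝ) (f : Θ → Z → ℝ) {n : ℕ} (θstar : Θ) (z : Fin n → Z) : ℝ :=
  ∫ x, ((∑' θ, post π f z θ * (-Real.log (f θ x))) + Real.log (pBayes π f z x)) *
    f θstar x ∂ρ

/-- The Kullback–Leibler divergence `D(P_{θ*} ‖ P_θ) = ∫ f_{θ*} log(f_{θ*}/f_θ) dρ`. -/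
def KLdiv {Z : Type*} [MeasurableSpace Z] (ρ : Measure Z) {Θ : Type*}
    (f : Θ → Z → ℝ) (θstar θ : Θ) : ℝ :=
  ∫ x, f θstar x * Real.log (f θstar x / f θ x) ∂ρ

/-- The expected next-step mixability gap is bounded by the posterior-expected
Kullback–Leibler divergence: `δ̄_n(θ*, z^n) ≤ Σ_θ π(θ | z^n) D(P_{θ*} ‖ P_θ)`. -/
lemma my_measurable_tsum_of_nonneg {α : Type*} [MeasurableSpace α] {Θ : Type*} [Countable Θ]
    {F : Θ → α → ℝ} (hmeas : ∀ θ, Measurable (F θ)) (h0 : ∀ θ x, 0 ≤ F θ x)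
    (hsum : ∀ x, Summable fun θ => F θ x) :
    Measurable fun x => ∑' θ, F θ x := by
  have h : (fun x => ∑' θ, F θ x) = fun x => (∑' θ, ENNReal.ofReal (F θ x)).toReal := by
    funext x
    rw [← ENNReal.ofReal_tsum_of_nonneg (fun θ => h0 θ x) (hsum x),
      ENNReal.toReal_ofReal (tsum_nonneg fun θ => h0 θ x)]
  rw [h]
  exact (Measurable.ennreal_tsum fun θ => (hmeas θ).ennreal_ofReal).ennreal_toReal

theorem deltaBar_le_posterior_expected_KL
    {Z : Type*} [MeasurableSpace Z] (ρ : Measure Z) [SigmaFinite ρ]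
    {Θ : Type*} [Countable Θ]
    (f : Θ → Z → ℝ) (hf_meas : ∀ θ, Measurable (f θ))
    (hf_pos : ∀ θ x, 0 < f θ x)
    (hf_int : ∀ θ, ∫ x, f θ x ∂ρ = 1)
    (π : Θ → ℝ) (hπ_pos : ∀ θ, 0 < π θ) (hπ_sum : ∑' θ, π θ = 1)
    (v : ℝ) (hv : 1 < v)
    (hratio : ∀ (x : Z) (θ θ' : Θ), f θ x ≤ v * f θ' x)
    (θstar : Θ) (n : ℕ) (z : Fin n → Z) :
    deltaBar ρ π f θstar z ≤ ∑' θ, post π f z θ * KLdiv ρ f θstar θ := by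
  classical
  set g : Z → ℝ := f θstar with hgdef
  have hg_pos : ∀ x, 0 < g x := hf_pos θstar
  have hv0 : (0:ℝ) < v := lt_trans one_pos hv
  have hlogv : 0 < Real.log v := Real.log_pos hv
  -- summability of the prior
  have hπ_summable : Summable π := by
    by_contra h
    rw [tsum_eq_zero_of_not_summable h] at hπ_sum
    norm_num at hπ_sum
  -- positivity & summability of posterior numerators
  have hpn_pos : ∀ θ, 0 < postNum π f z θ := fun θ =>
    mul_pos (hπ_pos θ) (Finset.prod_pos fun i _ => hf_pos θ (z i))
  have hpn_summable : Summable (postNum π f z) := by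
    refine Summable.of_nonneg_of_le (fun θ => (hpn_pos θ).le) (fun θ => ?_)
      (hπ_summable.mul_right (v ^ n * ∏ i, g (z i)))
    have h1 : ∏ i, f θ (z i) ≤ ∏ i, (v * g (z i)) :=
      Finset.prod_le_prod (fun i _ => (hf_pos θ (z i)).le) (fun i _ => hratio (z i) θ θstar)
    have h2 : ∏ i : Fin n, (v * g (z i)) = v ^ n * ∏ i, g (z i) := by
      rw [Finset.prod_mul_distrib, Finset.prod_const, Finset.card_univ, Fintype.card_fin]
    calc postNum π f z θ = π θ * ∏ i, f θ (z i) := rfl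
      _ ≤ π θ * (v ^ n * ∏ i, g (z i)) := by
          apply mul_le_mul_of_nonneg_left _ (hπ_pos θ).le
          rw [← h2]; exact h1
  set D : ℝ := ∑' θ', postNum π f z θ' with hDdef
  have hD_pos : 0 < D := lt_of_lt_of_le (hpn_pos θstar)
    (Summable.le_tsum hpn_summable θstar fun θ' _ => (hpn_pos θ').le)
  set w : Θ → ℝ := post π f z with hwdef
  have hw_eq : ∀ θ, w θ = postNum π f z θ / D := fun θ => rfl
  have hw_pos : ∀ θ, 0 < w θ := fun θ => div_pos (hpn_pos θ) hD_pos
  have hw_summable : Summable w := by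
    exact hpn_summable.div_const D
  have hw_sum : ∑' θ, w θ = 1 := by
    have : ∑' θ, w θ = (∑' θ, postNum π f z θ) / D := by
      simp only [hw_eq]; exact tsum_div_const
    rw [this, ← hDdef, div_self (ne_of_gt hD_pos)]
  -- pointwise density-ratio bounds
  have hub : ∀ θ x, f θ x ≤ v * g x := fun θ x => hratio x θ θstar
  have hlb : ∀ θ x, g x / v ≤ f θ x := fun θ x => by
    rw [div_le_iff₀ hv0]
    calc g x ≤ v * f θ x := hratio x θstar θ
      _ = f θ x * v := mul_comm _ _
  -- bounds on p
  set p : Z → ℝ := pBayes π f z with hpdef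
  have hp_eq : ∀ x, p x = ∑' θ, w θ * f θ x := fun x => rfl
  have hsum_wf : ∀ x, Summable fun θ => w θ * f θ x := fun x =>
    Summable.of_nonneg_of_le (fun θ => (mul_pos (hw_pos θ) (hf_pos θ x)).le)
      (fun θ => mul_le_mul_of_nonneg_left (hub θ x) (hw_pos θ).le)
      (hw_summable.mul_right (v * g x))
  have hp_le : ∀ x, p x ≤ v * g x := by
    intro x
    rw [hp_eq]
    calc ∑' θ, w θ * f θ x ≤ ∑' θ, w θ * (v * g x) :=
          Summable.tsum_le_tsum (fun θ => mul_le_mul_of_nonneg_left (hub θ x) (hw_pos θ).le)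
            (hsum_wf x) (hw_summable.mul_right _)
      _ = (∑' θ, w θ) * (v * g x) := tsum_mul_right
      _ = v * g x := by rw [hw_sum, one_mul]
  have hp_ge : ∀ x, g x / v ≤ p x := by
    intro x
    rw [hp_eq]
    calc g x / v = (∑' θ, w θ) * (g x / v) := by rw [hw_sum, one_mul]
      _ = ∑' θ, w θ * (g x / v) := tsum_mul_right.symm
      _ ≤ ∑' θ, w θ * f θ x :=
          Summable.tsum_le_tsum (fun θ => mul_le_mul_of_nonneg_left (hlb θ x) (hw_pos θ).le)
            (hw_summable.mul_right _) (hsum_wf x)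
  have hp_pos : ∀ x, 0 < p x := fun x =>
    lt_of_lt_of_le (div_pos (hg_pos x) hv0) (hp_ge x)
  -- log bounds
  have hlog_ub : ∀ θ x, Real.log (f θ x) ≤ Real.log (g x) + Real.log v := by
    intro θ x
    calc Real.log (f θ x) ≤ Real.log (v * g x) :=
          Real.log_le_log (hf_pos θ x) (hub θ x)
      _ = Real.log (g x) + Real.log v := by
          rw [Real.log_mul (ne_of_gt hv0) (ne_of_gt (hg_pos x))]; ring
  have hlog_lb : ∀ θ x, Real.log (g x) - Real.log v ≤ Real.log (f θ x) := by
    intro θ x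
    have := Real.log_le_log (div_pos (hg_pos x) hv0) (hlb θ x)
    rwa [Real.log_div (ne_of_gt (hg_pos x)) (ne_of_gt hv0)] at this
  have hlogp_ub : ∀ x, Real.log (p x) ≤ Real.log (g x) + Real.log v := by
    intro x
    calc Real.log (p x) ≤ Real.log (v * g x) := Real.log_le_log (hp_pos x) (hp_le x)
      _ = Real.log (g x) + Real.log v := by
          rw [Real.log_mul (ne_of_gt hv0) (ne_of_gt (hg_pos x))]; ring
  have hlogp_lb : ∀ x, Real.log (g x) - Real.log v ≤ Real.log (p x) := by
    intro x
    have := Real.log_le_log (div_pos (hg_pos x) hv0) (hp_ge x)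
    rwa [Real.log_div (ne_of_gt (hg_pos x)) (ne_of_gt hv0)] at this
  -- a generic tsum computation: ∑' θ, w θ * (b θ + c) = (∑' θ, w θ * b θ) + c
  have htsum_shift : ∀ (b : Θ → ℝ) (c : ℝ), Summable (fun θ => w θ * b θ) →
      ∑' θ, w θ * (b θ + c) = (∑' θ, w θ * b θ) + c := by
    intro b c hb
    have : ∀ θ, w θ * (b θ + c) = w θ * b θ + w θ * c := fun θ => by ring
    rw [tsum_congr this, Summable.tsum_add hb (hw_summable.mul_right c), tsum_mul_right, hw_sum, one_mul]
  -- summability of weighted bounded families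
  have hsum_bdd : ∀ (b : Θ → ℝ) (C : ℝ), (∀ θ, |b θ| ≤ C) → Summable (fun θ => w θ * b θ) := by
    intro b C hC
    apply Summable.of_abs
    refine Summable.of_nonneg_of_le (fun θ => abs_nonneg _) (fun θ => ?_)
      (hw_summable.mul_right C)
    rw [abs_mul, abs_of_pos (hw_pos θ)]
    exact mul_le_mul_of_nonneg_left (hC θ) (hw_pos θ).le
  -- abs bounds on log differences
  have habs_gf : ∀ θ x, |Real.log (g x) - Real.log (f θ x)| ≤ Real.log v := by
    intro θ x
    rw [abs_le]
    constructor
    · have := hlog_ub θ x; linarith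
    · have := hlog_lb θ x; linarith
  have habs_pf : ∀ θ x, |Real.log (p x) - Real.log (f θ x)| ≤ 2 * Real.log v := by
    intro θ x
    rw [abs_le]
    constructor
    · have h1 := hlogp_lb x; have h2 := hlog_ub θ x; linarith
    · have h1 := hlogp_ub x; have h2 := hlog_lb θ x; linarith
  -- summability of the weighted log-families (pointwise in x)
  have hsum_neglog : ∀ x, Summable fun θ => w θ * (-Real.log (f θ x)) := by
    intro x
    apply hsum_bdd _ (|Real.log (g x)| + Real.log v)
    intro θ
    rw [abs_neg, abs_le]
    constructor
    · have h1 := hlog_lb θ x; have h2 := neg_abs_le (Real.log (g x)); linarith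
    · have h1 := hlog_ub θ x; have h2 := le_abs_self (Real.log (g x)); linarith
  have hsum_lgf : ∀ x, Summable fun θ => w θ * (Real.log (g x) - Real.log (f θ x)) :=
    fun x => hsum_bdd _ (Real.log v) (fun θ => habs_gf θ x)
  have hsum_lpf : ∀ x, Summable fun θ => w θ * (Real.log (p x) - Real.log (f θ x)) :=
    fun x => hsum_bdd _ (2 * Real.log v) (fun θ => habs_pf θ x)
  -- the auxiliary nonnegative tsum T, used for measurability
  set T : Z → ℝ := fun x => ∑' θ, w θ * (Real.log v + Real.log (g x) - Real.log (f θ x))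
    with hTdef
  have hT_eq : ∀ x, T x = (∑' θ, w θ * (-Real.log (f θ x))) + (Real.log (g x) + Real.log v) := by
    intro x
    simp only [hTdef]
    rw [tsum_congr (fun θ =>
      (by ring : w θ * (Real.log v + Real.log (g x) - Real.log (f θ x)) =
        w θ * ((-Real.log (f θ x)) + (Real.log (g x) + Real.log v))))]
    exact htsum_shift _ _ (hsum_neglog x)
  have hT_meas : Measurable T := by
    apply my_measurable_tsum_of_nonneg
    · intro θ
      exact (((measurable_const.add (hf_meas θstar).log).sub (hf_meas θ).log).const_mul (w θ))
    · intro θ x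
      have h1 := hlog_ub θ x
      have h2 := (hw_pos θ).le
      nlinarith
    · intro x
      apply hsum_bdd _ (2 * Real.log v)
      intro θ
      rw [abs_le]
      constructor
      · have := hlog_ub θ x; linarith
      · have := hlog_lb θ x; linarith
  have hS_meas : Measurable fun x => ∑' θ, w θ * (-Real.log (f θ x)) := by
    have h : (fun x => ∑' θ, w θ * (-Real.log (f θ x))) =
        fun x => T x - (Real.log (g x) + Real.log v) := by
      funext x; have := hT_eq x; linarith
    rw [h]
    exact hT_meas.sub ((hf_meas θstar).log.add measurable_const)
  have hp_meas : Measurable p := by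
    have h : p = fun x => ∑' θ, w θ * f θ x := funext hp_eq
    rw [h]
    exact my_measurable_tsum_of_nonneg (fun θ => (hf_meas θ).const_mul (w θ))
      (fun θ x => (mul_pos (hw_pos θ) (hf_pos θ x)).le) hsum_wf
  -- integrability of the densities
  have hint_f : ∀ θ, Integrable (f θ) ρ := by
    intro θ
    by_contra h
    have := hf_int θ
    rw [integral_undef h] at this
    norm_num at this
  have hint_g : Integrable g ρ := hint_f θstar
  have hlint : ∀ θ, ∫⁻ x, ENNReal.ofReal (f θ x) ∂ρ = 1 := by
    intro θ
    rw [← ofReal_integral_eq_lintegral_ofReal (hint_f θ) (ae_of_all _ fun x => (hf_pos θ x).le),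
      hf_int θ, ENNReal.ofReal_one]
  -- ∫ p = 1
  have hint_p_eq : ∫ x, p x ∂ρ = 1 := by
    have hAESM : ∀ θ, AEStronglyMeasurable (fun x => w θ * f θ x) ρ :=
      fun θ => ((hf_meas θ).const_mul (w θ)).aestronglyMeasurable
    have hfin : ∑' θ, ∫⁻ x, ‖w θ * f θ x‖₊ ∂ρ ≠ ∞ := by
      have h1 : ∀ θ, ∫⁻ x, ‖w θ * f θ x‖₊ ∂ρ = ENNReal.ofReal (w θ) := by
        intro θ
        have : ∀ x, (‖w θ * f θ x‖₊ : ℝ≥0∞) = ENNReal.ofReal (w θ) * ENNReal.ofReal (f θ x) := by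
          intro x
          rw [← enorm_eq_nnnorm, ← ofReal_norm, Real.norm_eq_abs,
            abs_of_pos (mul_pos (hw_pos θ) (hf_pos θ x)), ENNReal.ofReal_mul (hw_pos θ).le]
        rw [lintegral_congr this, lintegral_const_mul' _ _ ENNReal.ofReal_ne_top, hlint θ, mul_one]
      rw [tsum_congr h1, ← ENNReal.ofReal_tsum_of_nonneg (fun θ => (hw_pos θ).le) hw_summable,
        hw_sum]
      exact ENNReal.ofReal_ne_top
    calc ∫ x, p x ∂ρ = ∫ x, ∑' θ, w θ * f θ x ∂ρ := by congr 1
      _ = ∑' θ, ∫ x, w θ * f θ x ∂ρ := integral_tsum hAESM hfin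
      _ = ∑' θ, w θ * ∫ x, f θ x ∂ρ := tsum_congr fun θ => integral_const_mul _ _
      _ = ∑' θ, w θ := by
          refine tsum_congr fun θ => ?_
          rw [hf_int θ, mul_one]
      _ = 1 := hw_sum
  have hint_p : Integrable p ρ := by
    refine (hint_g.const_mul v).mono hp_meas.aestronglyMeasurable (ae_of_all _ fun x => ?_)
    rw [Real.norm_eq_abs, Real.norm_eq_abs, abs_of_pos (hp_pos x),
      abs_of_pos (mul_pos hv0 (hg_pos x))]
    exact hp_le x
  -- the deltaBar integrand
  set φ : Z → ℝ := fun x =>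
    ((∑' θ, w θ * (-Real.log (f θ x))) + Real.log (p x)) * g x with hφdef
  have hφ_meas : Measurable φ := (hS_meas.add hp_meas.log).mul (hf_meas θstar)
  have hφ_inner : ∀ x, (∑' θ, w θ * (-Real.log (f θ x))) + Real.log (p x) =
      ∑' θ, w θ * (Real.log (p x) - Real.log (f θ x)) := by
    intro x
    rw [tsum_congr (fun θ =>
      (by ring : w θ * (Real.log (p x) - Real.log (f θ x)) =
        w θ * ((-Real.log (f θ x)) + Real.log (p x))))]
    rw [htsum_shift _ _ (hsum_neglog x)]
  -- generic: |∑' θ, w θ * b θ| ≤ C if |b θ| ≤ C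
  have habs_tsum : ∀ (b : Θ → ℝ) (C : ℝ), 0 ≤ C → (∀ θ, |b θ| ≤ C) →
      |∑' θ, w θ * b θ| ≤ C := by
    intro b C hC0 hC
    have hs : Summable fun θ => |w θ * b θ| := by
      refine Summable.of_nonneg_of_le (fun θ => abs_nonneg _) (fun θ => ?_)
        (hw_summable.mul_right C)
      rw [abs_mul, abs_of_pos (hw_pos θ)]
      exact mul_le_mul_of_nonneg_left (hC θ) (hw_pos θ).le
    calc |∑' θ, w θ * b θ| ≤ ∑' θ, |w θ * b θ| := by
          have := norm_tsum_le_tsum_norm (f := fun θ => w θ * b θ)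
            (by simpa only [Real.norm_eq_abs] using hs)
          simpa only [Real.norm_eq_abs] using this
      _ ≤ ∑' θ, w θ * C := Summable.tsum_le_tsum (fun θ => by
            rw [abs_mul, abs_of_pos (hw_pos θ)]
            exact mul_le_mul_of_nonneg_left (hC θ) (hw_pos θ).le) hs (hw_summable.mul_right C)
      _ = C := by rw [tsum_mul_right, hw_sum, one_mul]
  have hint_φ : Integrable φ ρ := by
    refine (hint_g.const_mul (2 * Real.log v)).mono hφ_meas.aestronglyMeasurable
      (ae_of_all _ fun x => ?_)
    rw [Real.norm_eq_abs, Real.norm_eq_abs]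
    simp only [hφdef]
    rw [abs_mul, abs_of_pos (hg_pos x), hφ_inner x,
      abs_of_nonneg (mul_nonneg (by nlinarith : (0:ℝ) ≤ 2 * Real.log v) (hg_pos x).le)]
    exact mul_le_mul_of_nonneg_right
      (habs_tsum _ _ (by nlinarith) (fun θ => habs_pf θ x)) (hg_pos x).le
  -- the RHS integrand
  set R : Z → ℝ := fun x => ∑' θ, w θ * (g x * Real.log (g x / f θ x)) with hRdef
  have hR_eq : ∀ x, R x = g x * ∑' θ, w θ * (Real.log (g x) - Real.log (f θ x)) := by
    intro x
    rw [hRdef]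
    simp only
    rw [tsum_congr (fun θ =>
      (by rw [Real.log_div (ne_of_gt (hg_pos x)) (ne_of_gt (hf_pos θ x))]; ring :
        w θ * (g x * Real.log (g x / f θ x)) =
          g x * (w θ * (Real.log (g x) - Real.log (f θ x)))))]
    exact tsum_mul_left
  have hR_meas : Measurable R := by
    have h : R = fun x => g x * (T x - Real.log v) := by
      funext x
      rw [hR_eq x]
      congr 1
      have h2 := hT_eq x
      have h3 : ∑' θ, w θ * (Real.log (g x) - Real.log (f θ x)) =
          (∑' θ, w θ * (-Real.log (f θ x))) + Real.log (g x) := by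
        rw [tsum_congr (fun θ =>
          (by ring : w θ * (Real.log (g x) - Real.log (f θ x)) =
            w θ * ((-Real.log (f θ x)) + Real.log (g x))))]
        exact htsum_shift _ _ (hsum_neglog x)
      rw [h3]; linarith
    rw [h]
    exact (hf_meas θstar).mul (hT_meas.sub measurable_const)
  have hint_R : Integrable R ρ := by
    refine (hint_g.const_mul (Real.log v)).mono hR_meas.aestronglyMeasurable
      (ae_of_all _ fun x => ?_)
    rw [Real.norm_eq_abs, Real.norm_eq_abs, hR_eq x, abs_mul, abs_of_pos (hg_pos x),
      abs_of_nonneg (mul_nonneg hlogv.le (hg_pos x).le)]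
    calc g x * |∑' θ, w θ * (Real.log (g x) - Real.log (f θ x))| ≤ g x * Real.log v :=
          mul_le_mul_of_nonneg_left (habs_tsum _ _ hlogv.le (fun θ => habs_gf θ x)) (hg_pos x).le
      _ = Real.log v * g x := mul_comm _ _
  -- pointwise inequality
  have hpoint : ∀ x, φ x + (g x - p x) ≤ R x := by
    intro x
    have hkey := Real.log_le_sub_one_of_pos (div_pos (hp_pos x) (hg_pos x))
    rw [Real.log_div (ne_of_gt (hp_pos x)) (ne_of_gt (hg_pos x))] at hkey
    have hkey2 : g x * (Real.log (p x) - Real.log (g x)) ≤ p x - g x := by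
      have h1 : g x * (Real.log (p x) - Real.log (g x)) ≤ g x * (p x / g x - 1) :=
        mul_le_mul_of_nonneg_left hkey (hg_pos x).le
      have h2 : g x * (p x / g x - 1) = p x - g x := by
        field_simp [ne_of_gt (hg_pos x)]
      linarith
    have hφx : φ x = ((∑' θ, w θ * (-Real.log (f θ x))) + Real.log (p x)) * g x := rfl
    have hRx : R x = ((∑' θ, w θ * (-Real.log (f θ x))) + Real.log (g x)) * g x := by
      rw [hR_eq x]
      rw [tsum_congr (fun θ =>
        (by ring : w θ * (Real.log (g x) - Real.log (f θ x)) =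
          w θ * ((-Real.log (f θ x)) + Real.log (g x))))]
      rw [htsum_shift _ _ (hsum_neglog x)]
      ring
    rw [hφx, hRx]
    nlinarith [hkey2]
  -- assembling everything
  have hAESM : ∀ θ, AEStronglyMeasurable (fun x => w θ * (g x * Real.log (g x / f θ x))) ρ :=
    fun θ => (((hf_meas θstar).mul ((hf_meas θstar).div (hf_meas θ)).log).const_mul
      (w θ)).aestronglyMeasurable
  have hfin : ∑' θ, ∫⁻ x, ‖w θ * (g x * Real.log (g x / f θ x))‖₊ ∂ρ ≠ ∞ := by
    have h1 : ∀ θ, ∫⁻ x, ‖w θ * (g x * Real.log (g x / f θ x))‖₊ ∂ρ ≤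
        ENNReal.ofReal (w θ * Real.log v) := by
      intro θ
      have hb : ∀ x, ‖w θ * (g x * Real.log (g x / f θ x))‖ ≤ (w θ * Real.log v) * g x := by
        intro x
        rw [Real.norm_eq_abs, abs_mul, abs_mul, abs_of_pos (hw_pos θ), abs_of_pos (hg_pos x)]
        have hlg : |Real.log (g x / f θ x)| ≤ Real.log v := by
          rw [Real.log_div (ne_of_gt (hg_pos x)) (ne_of_gt (hf_pos θ x))]
          exact habs_gf θ x
        calc w θ * (g x * |Real.log (g x / f θ x)|) ≤ w θ * (g x * Real.log v) :=
              mul_le_mul_of_nonneg_left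
                (mul_le_mul_of_nonneg_left hlg (hg_pos x).le) (hw_pos θ).le
          _ = (w θ * Real.log v) * g x := by ring
      calc ∫⁻ x, ‖w θ * (g x * Real.log (g x / f θ x))‖₊ ∂ρ
          ≤ ∫⁻ x, ENNReal.ofReal ((w θ * Real.log v) * g x) ∂ρ := by
            refine lintegral_mono fun x => ?_
            rw [← enorm_eq_nnnorm, ← ofReal_norm]
            exact ENNReal.ofReal_le_ofReal (hb x)
        _ = ∫⁻ x, ENNReal.ofReal (w θ * Real.log v) * ENNReal.ofReal (g x) ∂ρ := by
            refine lintegral_congr fun x => ?_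
            rw [ENNReal.ofReal_mul (mul_nonneg (hw_pos θ).le hlogv.le)]
        _ = ENNReal.ofReal (w θ * Real.log v) := by
            rw [lintegral_const_mul' _ _ ENNReal.ofReal_ne_top, hlint θstar, mul_one]
    refine ne_top_of_le_ne_top (b := ENNReal.ofReal (Real.log v)) ENNReal.ofReal_ne_top ?_
    calc ∑' θ, ∫⁻ x, ‖w θ * (g x * Real.log (g x / f θ x))‖₊ ∂ρ
        ≤ ∑' θ, ENNReal.ofReal (w θ * Real.log v) := ENNReal.tsum_le_tsum h1
      _ = ENNReal.ofReal (∑' θ, w θ * Real.log v) :=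
          (ENNReal.ofReal_tsum_of_nonneg (fun θ => mul_nonneg (hw_pos θ).le hlogv.le)
            (hw_summable.mul_right _)).symm
      _ = ENNReal.ofReal (Real.log v) := by rw [tsum_mul_right, hw_sum, one_mul]
  have hδ : deltaBar ρ π f θstar z = ∫ x, φ x ∂ρ := rfl
  rw [hδ]
  have hgp : Integrable (fun x => g x - p x) ρ := hint_g.sub hint_p
  have hsum_int : Integrable (fun x => φ x + (g x - p x)) ρ := hint_φ.add hgp
  calc ∫ x, φ x ∂ρ = ∫ x, φ x ∂ρ + ((∫ x, g x ∂ρ) - ∫ x, p x ∂ρ) := by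
        rw [hf_int θstar, hint_p_eq]; ring
    _ = ∫ x, (φ x + (g x - p x)) ∂ρ := by
        rw [integral_add hint_φ hgp, integral_sub hint_g hint_p]
    _ ≤ ∫ x, R x ∂ρ := integral_mono hsum_int hint_R hpoint
    _ = ∑' θ, ∫ x, w θ * (g x * Real.log (g x / f θ x)) ∂ρ := integral_tsum hAESM hfin
    _ = ∑' θ, w θ * KLdiv ρ f θstar θ := by
        refine tsum_congr fun θ => ?_
        rw [integral_const_mul]
        rfl
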